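/- arXiv:math/0606726 — 4 statements merged into one kernel-verified Lean document; each statement's English description precedes it below -/
import Mathlib

section
/- The map φ from permutations of {x_1 < ... < x_n} to triangulations of the (n+2)-gon, defined by iteratively joining the two current neighbors of the next letter of the permutation by a diagonal and then deleting that vertex, is surjective. -/
open scoped Classical

/-- `d` is a diagonal of the convex `(n+2)`-gon with vertices `0,…,n+1`
(in clockwise increasing order): it joins two nonadjacent vertices. -/
def IsDiagonal (n : ℕ) (d : ℕ × ℕ) : Prop :=
  d.1 < d.2 ∧ d.2 ≤ n + 1 ∧ d.2 ≠ d.1 + 1 ∧ ¬(d.1 = 0 ∧ d.2 = n + 1)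

/-- Two diagonals of a convex polygon cross. -/
def Crosses (d e : ℕ × ℕ) : Prop :=
  (d.1 < e.1 ∧ e.1 < d.2 ∧ d.2 < e.2) ∨ (e.1 < d.1 ∧ d.1 < e.2 ∧ e.2 < d.2)

/-- A triangulation of the convex `(n+2)`-gon: `n-1` pairwise noncrossing diagonals. -/
def IsTriangulation (n : ℕ) (D : Finset (ℕ × ℕ)) : Prop :=
  (∀ d ∈ D, IsDiagonal n d) ∧ (∀ d ∈ D, ∀ e ∈ D, ¬ Crosses d e) ∧ D.card = n - 1

/-- `{a,b}` (with `a<b`) is an edge of the triangulation `D`: a polygon side or a diagonal. -/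
def IsEdge (n : ℕ) (D : Finset (ℕ × ℕ)) (a b : ℕ) : Prop :=
  a < b ∧ b ≤ n + 1 ∧ (b = a + 1 ∨ (a = 0 ∧ b = n + 1) ∨ (a, b) ∈ D)

/-- `{a,b,c}` (with `a<b<c`) is a (triangular) face of the triangulation `D`. -/
def IsFace (n : ℕ) (D : Finset (ℕ × ℕ)) (a b c : ℕ) : Prop :=
  a < b ∧ b < c ∧ IsEdge n D a b ∧ IsEdge n D b c ∧ IsEdge n D a c

/-- An ear of a triangulation: a vertex incident to no diagonal. -/
def IsEar (n : ℕ) (D : Finset (ℕ × ℕ)) (v : ℕ) : Prop :=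
  v ≤ n + 1 ∧ ∀ d ∈ D, d.1 ≠ v ∧ d.2 ≠ v

/-- Degree of a vertex: number of edges (polygon sides and diagonals) incident to it. -/
noncomputable def degreeOf (n : ℕ) (D : Finset (ℕ × ℕ)) (v : ℕ) : ℕ :=
  ((Finset.range (n + 2)).filter (fun w => w ≠ v ∧ IsEdge n D (min v w) (max v w))).card

/-- The set of faces of a triangulation, as increasing triples. -/
noncomputable def facesSet (n : ℕ) (D : Finset (ℕ × ℕ)) : Finset (ℕ × ℕ × ℕ) :=
  (Finset.range (n + 2) ×ˢ Finset.range (n + 2) ×ˢ Finset.range (n + 2)).filter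
    (fun t => IsFace n D t.1 t.2.1 t.2.2)

/-- Predecessor of `v` in the vertex set `Y`. -/
def predIn (Y : Finset ℕ) (v : ℕ) : ℕ := WithBot.unbotD 0 (Y.filter (· < v)).max
/-- Successor of `v` in the vertex set `Y`. -/
def succIn (Y : Finset ℕ) (v : ℕ) : ℕ := WithTop.untopD 0 (Y.filter (v < ·)).min

/-- The iterative neighbor-joining construction: for each successive letter,
join its two current neighbors by a diagonal and delete the letter's vertex. -/
def phiAux : List ℕ → Finset ℕ → Finset (ℕ × ℕ)
  | [], _ => ∅
  | [_], _ => ∅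
  | v :: rest, Y => insert (predIn Y v, succIn Y v) (phiAux rest (Y.erase v))

/-- The map `φ` from permutations (standard words, letters `1,…,n`) to
triangulations of the `(n+2)`-gon with vertices `0,…,n+1`. -/
def phiT (n : ℕ) (l : List ℕ) : Finset (ℕ × ℕ) := phiAux l (Finset.range (n + 2))

/-- `t` is the third vertex of a face of `D` containing the polygon side `{i, i+1}`. -/
def FaceOnEdge (n : ℕ) (D : Finset (ℕ × ℕ)) (i t : ℕ) : Prop :=
  (t < i ∧ IsFace n D t i (i + 1)) ∨ (i + 1 < t ∧ IsFace n D i (i + 1) t)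

/-- `D` and `D'` differ by one diagonal flip, in the quadrilateral `a<b<c<d`. -/
def FlipAdj (n : ℕ) (D D' : Finset (ℕ × ℕ)) : Prop :=
  ∃ a b c d : ℕ, a < b ∧ b < c ∧ c < d ∧
    ((IsFace n D a b d ∧ IsFace n D b c d ∧ D' = insert (a, c) (D.erase (b, d))) ∨
     (IsFace n D a b c ∧ IsFace n D a c d ∧ D' = insert (b, d) (D.erase (a, c))))

/-- Sylvester adjacency: `u x z u' y u'' ~ u z x u' y u''` with `x ≤ y < z`. -/
def SylvAdj (w1 w2 : List ℕ) : Prop :=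
  ∃ (u u' u'' : List ℕ) (x y z : ℕ), x ≤ y ∧ y < z ∧
    w1 = u ++ x :: z :: (u' ++ y :: u'') ∧ w2 = u ++ z :: x :: (u' ++ y :: u'')

/-- Sylvester congruence: the equivalence relation generated by sylvester adjacency. -/
def SylvCong : List ℕ → List ℕ → Prop := Relation.EqvGen SylvAdj

/-- Standardization of a word: replace the occurrences of the smallest letter,
left to right, by `1, 2, …`, then continue with the next letter, etc. -/
def stdW (w : List ℕ) : List ℕ :=
  (List.range w.length).map (fun i =>
    (((List.range w.length).filter (fun j =>
      w.getD j 0 < w.getD i 0 ∨ (w.getD j 0 = w.getD i 0 ∧ j < i))).length) + 1)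

/-- Partial sums of an evaluation `μ`. -/
def Msum (μ : ℕ → ℕ) (s : ℕ) : ℕ := ∑ t ∈ Finset.range s, μ t

/-- The color (block index) of the vertex `i` for the increasing coloring `ε_μ`. -/
noncomputable def colOf (μ : ℕ → ℕ) (p i : ℕ) : ℕ :=
  ((Finset.range p).filter (fun s => Msum μ (s + 1) < i)).card

/-- `D`, colored by the increasing coloring `ε_μ`, is a simple colored triangulation. -/
def SimpleFor (n p : ℕ) (μ : ℕ → ℕ) (D : Finset (ℕ × ℕ)) : Prop :=
  IsTriangulation n D ∧
  (∀ d ∈ D, 1 ≤ d.1 → d.2 ≤ n → colOf μ p d.1 ≠ colOf μ p d.2) ∧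
  (∀ i t, 1 ≤ i → i + 1 ≤ n → colOf μ p i = colOf μ p (i + 1) →
    FaceOnEdge n D i t → t < i)

/-- Switched flip: a diagonal flip (preserving vertex colors) whose two adjacent
faces (with middle vertices `b` and `c`) have different colors. -/
def SwFlipAdj (n p : ℕ) (μ : ℕ → ℕ) (D D' : Finset (ℕ × ℕ)) : Prop :=
  ∃ a b c d : ℕ, a < b ∧ b < c ∧ c < d ∧ colOf μ p b ≠ colOf μ p c ∧
    ((IsFace n D a b d ∧ IsFace n D b c d ∧ D' = insert (a, c) (D.erase (b, d))) ∨
     (IsFace n D a b c ∧ IsFace n D a c d ∧ D' = insert (b, d) (D.erase (a, c))))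
namespace Stmt4Aux

/-- Generalized diagonal of the polygon with vertex set `Y` (in increasing circular order). -/
def GDiag (Y : Finset ℕ) (d : ℕ × ℕ) : Prop :=
  d.1 ∈ Y ∧ d.2 ∈ Y ∧ d.1 < d.2 ∧ (∃ z ∈ Y, d.1 < z ∧ z < d.2) ∧
    ((∃ z ∈ Y, z < d.1) ∨ (∃ z ∈ Y, d.2 < z))

/-- Generalized triangulation of the polygon with vertex set `Y`. -/
def GTri (Y : Finset ℕ) (D : Finset (ℕ × ℕ)) : Prop :=
  (∀ d ∈ D, GDiag Y d) ∧ (∀ d ∈ D, ∀ e ∈ D, ¬ Crosses d e) ∧ D.card = Y.card - 3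

/-- Internal vertices of the polygon with vertex set `Y`. -/
noncomputable def intern (Y : Finset ℕ) : Finset ℕ :=
  Y.filter (fun v => (∃ a ∈ Y, a < v) ∧ (∃ b ∈ Y, v < b))

lemma card3_of_intern {Y : Finset ℕ} {v : ℕ} (h : v ∈ intern Y) : 3 ≤ Y.card := by
  rw [intern, Finset.mem_filter] at h
  obtain ⟨hv, ⟨a, ha, hav⟩, ⟨b, hb, hvb⟩⟩ := h
  have : ({a, v, b} : Finset ℕ) ⊆ Y := by
    intro x hx
    simp only [Finset.mem_insert, Finset.mem_singleton] at hx
    rcases hx with rfl | rfl | rfl <;> assumption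
  calc 3 = ({a, v, b} : Finset ℕ).card := by
          rw [Finset.card_insert_of_notMem (by simp; omega),
            Finset.card_insert_of_notMem (by simp; omega), Finset.card_singleton]
    _ ≤ Y.card := Finset.card_le_card this

/-- Key cardinality bound. -/
lemma bound : ∀ (k : ℕ) (Y : Finset ℕ) (D : Finset (ℕ × ℕ)), Y.card ≤ k →
    (∀ d ∈ D, GDiag Y d) → (∀ d ∈ D, ∀ e ∈ D, ¬ Crosses d e) →
    D.card ≤ Y.card - 3 := by
  intro k
  induction k with
  | zero =>
    intro Y D hk hGD _
    rcases D.eq_empty_or_nonempty with rfl | ⟨d, hd⟩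
    · simp
    · exfalso
      have h := (hGD d hd).1
      have hY : Y = ∅ := Finset.card_eq_zero.mp (Nat.le_zero.mp hk)
      simp [hY] at h
  | succ k ih =>
    intro Y D hk hGD hNC
    rcases D.eq_empty_or_nonempty with rfl | ⟨⟨a, b⟩, hd⟩
    · simp
    obtain ⟨ha, hb, hab, ⟨z0, hz0Y, hz0a, hz0b⟩, hwrap⟩ := hGD _ hd
    simp only at ha hb hab hz0a hz0b hwrap
    -- crossing facts with (a,b)
    have hc1 : ∀ e ∈ D, ¬((a < e.1 ∧ e.1 < b ∧ b < e.2) ∨ (e.1 < a ∧ a < e.2 ∧ e.2 < b)) := by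
      intro e he
      have := hNC _ hd e he
      simpa [Crosses] using this
    set P : ℕ × ℕ → Prop := fun e => a ≤ e.1 ∧ e.2 ≤ b with hP
    set Y1 := Y.filter (fun z => a ≤ z ∧ z ≤ b) with hY1
    set Y2 := Y.filter (fun z => z ≤ a ∨ b ≤ z) with hY2
    set D1 := (D.filter P).erase (a, b) with hD1
    set D2 := D.filter (fun e => ¬ P e) with hD2
    have hmemY1 : ∀ z ∈ Y, a ≤ z → z ≤ b → z ∈ Y1 := by
      intro z hz h1 h2; rw [hY1, Finset.mem_filter]; exact ⟨hz, h1, h2⟩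
    have hmemY2 : ∀ z ∈ Y, (z ≤ a ∨ b ≤ z) → z ∈ Y2 := by
      intro z hz h1; rw [hY2, Finset.mem_filter]; exact ⟨hz, h1⟩
    -- both endpoints of any e ∈ D2 lie outside the open interval (a,b)
    have hout : ∀ e ∈ D, ¬ P e → (e.1 ≤ a ∨ b ≤ e.1) ∧ (e.2 ≤ a ∨ b ≤ e.2) := by
      intro e he h
      have h1 := hc1 e he
      have h2 := (hGD e he).2.2.1
      rw [hP] at h
      constructor <;> omega
    -- D1 consists of diagonals of Y1
    have hGD1 : ∀ e ∈ D1, GDiag Y1 e := by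
      intro e he
      rw [hD1, Finset.mem_erase, Finset.mem_filter] at he
      obtain ⟨hne, heD, he1, he2⟩ := he
      obtain ⟨h1Y, h2Y, hlt, ⟨z, hzY, hz1, hz2⟩, _⟩ := hGD e heD
      have hne' : ¬(e.1 = a ∧ e.2 = b) := by
        intro ⟨u, v⟩; exact hne (Prod.ext_iff.mpr ⟨u, v⟩)
      refine ⟨hmemY1 _ h1Y (by omega) (by omega), hmemY1 _ h2Y (by omega) (by omega),
        hlt, ⟨z, hmemY1 _ hzY (by omega) (by omega), hz1, hz2⟩, ?_⟩
      by_cases hea : e.1 = a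
      · exact Or.inr ⟨b, hmemY1 _ hb (le_of_lt hab) le_rfl, by omega⟩
      · exact Or.inl ⟨a, hmemY1 _ ha le_rfl (le_of_lt hab), by omega⟩
    -- D2 consists of diagonals of Y2
    have hGD2 : ∀ e ∈ D2, GDiag Y2 e := by
      intro e he
      rw [hD2, Finset.mem_filter] at he
      obtain ⟨heD, hPe⟩ := he
      obtain ⟨h1Y, h2Y, hlt, ⟨z, hzY, hz1, hz2⟩, hwrapE⟩ := hGD e heD
      have hsd := hout e heD hPe
      have hPe' : ¬(a ≤ e.1 ∧ e.2 ≤ b) := hPe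
      have hne' : ¬(e.1 = a ∧ e.2 = b) := by intro h; exact hPe' (by omega)
      refine ⟨hmemY2 _ h1Y hsd.1, hmemY2 _ h2Y hsd.2, hlt, ?_, ?_⟩
      · by_cases hz' : z ≤ a ∨ b ≤ z
        · exact ⟨z, hmemY2 _ hzY hz', hz1, hz2⟩
        · -- a < z < b, so e.1 ≤ a and b ≤ e.2
          by_cases he1a : e.1 = a
          · exact ⟨b, hmemY2 _ hb (Or.inr le_rfl), by omega, by omega⟩
          · exact ⟨a, hmemY2 _ ha (Or.inl le_rfl), by omega, by omega⟩
      · rcases hwrapE with ⟨w, hwY, hw⟩ | ⟨w, hwY, hw⟩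
        · by_cases hw' : w ≤ a ∨ b ≤ w
          · exact Or.inl ⟨w, hmemY2 _ hwY hw', hw⟩
          · exact Or.inl ⟨a, hmemY2 _ ha (Or.inl le_rfl), by omega⟩
        · by_cases hw' : w ≤ a ∨ b ≤ w
          · exact Or.inr ⟨w, hmemY2 _ hwY hw', hw⟩
          · exact Or.inr ⟨b, hmemY2 _ hb (Or.inr le_rfl), by omega⟩
    -- cardinalities of Y1, Y2
    have hY1sub : Y1 ⊆ Y := Finset.filter_subset _ _
    have hY2sub : Y2 ⊆ Y := Finset.filter_subset _ _
    have hz0nY2 : z0 ∉ Y2 := by rw [hY2, Finset.mem_filter]; push_neg; intro _; omega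
    have hY2lt : Y2.card < Y.card :=
      Finset.card_lt_card ((Finset.ssubset_iff_of_subset hY2sub).mpr ⟨z0, hz0Y, hz0nY2⟩)
    have hY1lt : Y1.card < Y.card := by
      rcases hwrap with ⟨w, hwY, hw⟩ | ⟨w, hwY, hw⟩ <;>
        exact Finset.card_lt_card ((Finset.ssubset_iff_of_subset hY1sub).mpr
          ⟨w, hwY, by rw [hY1, Finset.mem_filter]; push_neg; intro _; omega⟩)
    have hUnion : Y1 ∪ Y2 = Y := by
      ext z
      simp only [hY1, hY2, Finset.mem_union, Finset.mem_filter]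
      constructor
      · rintro (⟨h, _⟩ | ⟨h, _⟩) <;> exact h
      · intro h
        by_cases h1 : z ≤ a
        · exact Or.inr ⟨h, Or.inl h1⟩
        · by_cases h2 : z ≤ b
          · exact Or.inl ⟨h, by omega⟩
          · exact Or.inr ⟨h, by omega⟩
    have hInter : Y1 ∩ Y2 = {a, b} := by
      ext z
      simp only [hY1, hY2, Finset.mem_inter, Finset.mem_filter, Finset.mem_insert,
        Finset.mem_singleton]
      constructor
      · rintro ⟨⟨_, h1⟩, ⟨_, h2⟩⟩; omega
      · rintro (rfl | rfl)
        · exact ⟨⟨ha, le_rfl, le_of_lt hab⟩, ha, Or.inl le_rfl⟩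
        · exact ⟨⟨hb, le_of_lt hab, le_rfl⟩, hb, Or.inr le_rfl⟩
    have hcard12 : Y1.card + Y2.card = Y.card + 2 := by
      have h := Finset.card_union_add_card_inter Y1 Y2
      rw [hUnion, hInter] at h
      have hab2 : ({a, b} : Finset ℕ).card = 2 := by
        rw [Finset.card_insert_of_notMem (by simp; omega), Finset.card_singleton]
      omega
    have hY1ge : 3 ≤ Y1.card := by
      have hsub : ({a, z0, b} : Finset ℕ) ⊆ Y1 := by
        intro x hx
        simp only [Finset.mem_insert, Finset.mem_singleton] at hx
        rcases hx with rfl | rfl | rfl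
        · exact hmemY1 _ ha le_rfl (le_of_lt hab)
        · exact hmemY1 _ hz0Y (by omega) (by omega)
        · exact hmemY1 _ hb (le_of_lt hab) le_rfl
      calc 3 = ({a, z0, b} : Finset ℕ).card := by
              rw [Finset.card_insert_of_notMem (by simp; omega),
                Finset.card_insert_of_notMem (by simp; omega), Finset.card_singleton]
        _ ≤ Y1.card := Finset.card_le_card hsub
    have hY2ge : 3 ≤ Y2.card := by
      have key : ∃ w ∈ Y, w < a ∨ b < w := by
        rcases hwrap with ⟨w, hwY, hw⟩ | ⟨w, hwY, hw⟩ <;> exact ⟨w, hwY, by omega⟩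
      obtain ⟨w, hwY, hw⟩ := key
      have hsub : ({a, b, w} : Finset ℕ) ⊆ Y2 := by
        intro x hx
        simp only [Finset.mem_insert, Finset.mem_singleton] at hx
        rcases hx with rfl | rfl | rfl
        · exact hmemY2 _ ha (Or.inl le_rfl)
        · exact hmemY2 _ hb (Or.inr le_rfl)
        · exact hmemY2 _ hwY (by omega)
      calc 3 = ({a, b, w} : Finset ℕ).card := by
              rw [Finset.card_insert_of_notMem (by simp; omega),
                Finset.card_insert_of_notMem (by simp; omega), Finset.card_singleton]
        _ ≤ Y2.card := Finset.card_le_card hsub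
    -- cardinality split of D
    have hmemP : (a, b) ∈ D.filter P := by
      rw [Finset.mem_filter]; exact ⟨hd, le_rfl, le_rfl⟩
    have hcD1 : D1.card = (D.filter P).card - 1 := Finset.card_erase_of_mem hmemP
    have hposP : 1 ≤ (D.filter P).card := Finset.card_pos.mpr ⟨_, hmemP⟩
    have hsplit : (D.filter P).card + D2.card = D.card := by
      rw [hD2]; exact Finset.card_filter_add_card_filter_not (p := P)
    -- noncrossing inherited
    have hD1sub : D1 ⊆ D := (Finset.erase_subset _ _).trans (Finset.filter_subset _ _)
    have hD2sub : D2 ⊆ D := Finset.filter_subset _ _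
    have hNC1 : ∀ d ∈ D1, ∀ e ∈ D1, ¬ Crosses d e := fun d hd' e he' =>
      hNC d (hD1sub hd') e (hD1sub he')
    have hNC2 : ∀ d ∈ D2, ∀ e ∈ D2, ¬ Crosses d e := fun d hd' e he' =>
      hNC d (hD2sub hd') e (hD2sub he')
    have ih1 := ih Y1 D1 (by omega) hGD1 hNC1
    have ih2 := ih Y2 D2 (by omega) hGD2 hNC2
    omega

/-- Every triangulation of a polygon with at least 4 vertices has an internal ear
whose cut-off diagonal is in the triangulation. -/
lemma key {Y : Finset ℕ} {D : Finset (ℕ × ℕ)} (hT : GTri Y D) (h4 : 4 ≤ Y.card) :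
    ∃ a v b, (a, b) ∈ D ∧ a ∈ Y ∧ v ∈ Y ∧ b ∈ Y ∧ a < v ∧ v < b ∧
      (∀ z ∈ Y, a < z → z < b → z = v) ∧ (∀ e ∈ D, e.1 ≠ v ∧ e.2 ≠ v) := by
  obtain ⟨hGD, hNC, hcard⟩ := hT
  have hDne : D.Nonempty := Finset.card_pos.mp (by omega)
  obtain ⟨d0, hd0, hmin⟩ := Finset.exists_min_image D
    (fun d => (Y.filter (fun z => d.1 < z ∧ z < d.2)).card) hDne
  obtain ⟨a, b⟩ := d0
  obtain ⟨ha, hb, hab, ⟨z0, hz0Y, hz0a, hz0b⟩, hwrap⟩ := hGD _ hd0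
  simp only at ha hb hab hz0a hz0b hwrap hmin ⊢
  -- every vertex strictly between a and b is an ear
  have hEar : ∀ v ∈ Y, a < v → v < b → ∀ e ∈ D, e.1 ≠ v ∧ e.2 ≠ v := by
    intro v hvY hav hvb e he
    have hlt : e.1 < e.2 := (hGD e he).2.2.1
    have hmine := hmin e he
    have hCd : ¬ Crosses (a, b) e := hNC _ hd0 e he
    simp only [Crosses] at hCd
    have hvbig : v ∈ Y.filter (fun z => a < z ∧ z < b) := by
      rw [Finset.mem_filter]; exact ⟨hvY, hav, hvb⟩
    constructor <;> intro heq
    · -- e.1 = v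
      by_cases hb2 : e.2 ≤ b
      · have hss : Y.filter (fun z => e.1 < z ∧ z < e.2) ⊂
            Y.filter (fun z => a < z ∧ z < b) := by
          rw [Finset.ssubset_iff_of_subset]
          · exact ⟨v, hvbig, by rw [Finset.mem_filter]; push_neg; intro _ h; omega⟩
          · intro x hx
            rw [Finset.mem_filter] at hx ⊢
            exact ⟨hx.1, by omega, by omega⟩
        have := Finset.card_lt_card hss
        omega
      · exact hCd (Or.inl ⟨by omega, by omega, by omega⟩)
    · -- e.2 = v
      by_cases ha1 : a ≤ e.1
      · have hss : Y.filter (fun z => e.1 < z ∧ z < e.2) ⊂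
            Y.filter (fun z => a < z ∧ z < b) := by
          rw [Finset.ssubset_iff_of_subset]
          · exact ⟨v, hvbig, by rw [Finset.mem_filter]; push_neg; intro _ _; omega⟩
          · intro x hx
            rw [Finset.mem_filter] at hx ⊢
            exact ⟨hx.1, by omega, by omega⟩
        have := Finset.card_lt_card hss
        omega
      · exact hCd (Or.inr ⟨by omega, by omega, by omega⟩)
  set B := Y.filter (fun z => a < z ∧ z < b) with hB
  have hz0B : z0 ∈ B := by rw [hB, Finset.mem_filter]; exact ⟨hz0Y, hz0a, hz0b⟩
  have hBmem : ∀ z ∈ B, z ∈ Y ∧ a < z ∧ z < b := by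
    intro z hz; rw [hB, Finset.mem_filter] at hz; exact hz
  have hB1 : B.card = 1 := by
    by_contra hne1
    have hB2 : 2 ≤ B.card := by
      have := Finset.card_pos.mpr ⟨z0, hz0B⟩
      omega
    set v1 := B.min' ⟨z0, hz0B⟩ with hv1
    have hv1B : v1 ∈ B := Finset.min'_mem _ _
    have hBe : (B.erase v1).Nonempty := by
      rw [← Finset.card_pos, Finset.card_erase_of_mem hv1B]; omega
    set v2 := (B.erase v1).min' hBe with hv2
    have hv2B' : v2 ∈ B.erase v1 := Finset.min'_mem _ _
    have hv2B : v2 ∈ B := Finset.mem_of_mem_erase hv2B'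
    have hv2ne : v2 ≠ v1 := Finset.ne_of_mem_erase hv2B'
    have h12 : v1 < v2 := lt_of_le_of_ne (Finset.min'_le _ _ hv2B) (Ne.symm hv2ne)
    obtain ⟨hv1Y, hav1, hv1b⟩ := hBmem _ hv1B
    obtain ⟨hv2Y, hav2, hv2b⟩ := hBmem _ hv2B
    have honly : ∀ z ∈ Y, a < z → z < v2 → z = v1 := by
      intro z hzY h1 h2
      have hzB : z ∈ B := by rw [hB, Finset.mem_filter]; exact ⟨hzY, h1, by omega⟩
      by_contra hzv1
      have : z ∈ B.erase v1 := Finset.mem_erase.mpr ⟨hzv1, hzB⟩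
      have := Finset.min'_le _ _ this
      omega
    have hspan_av2 : Y.filter (fun z => a < z ∧ z < v2) = {v1} := by
      ext x
      rw [Finset.mem_filter, Finset.mem_singleton]
      constructor
      · rintro ⟨hx, h1, h2⟩; exact honly x hx h1 h2
      · rintro rfl; exact ⟨hv1Y, hav1, h12⟩
    have hnotin : (a, v2) ∉ D := by
      intro h
      have := hmin _ h
      simp only [hspan_av2, Finset.card_singleton] at this
      omega
    have hGDnew : GDiag Y (a, v2) :=
      ⟨ha, hv2Y, by omega, ⟨v1, hv1Y, by omega, by omega⟩, Or.inr ⟨b, hb, hv2b⟩⟩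
    have hNCnew : ∀ e ∈ D, ¬ Crosses (a, v2) e ∧ ¬ Crosses e (a, v2) := by
      intro e he
      have hee : e.1 ∈ Y ∧ e.2 ∈ Y := ⟨(hGD e he).1, (hGD e he).2.1⟩
      have hearv1 := hEar v1 hv1Y hav1 hv1b e he
      constructor
      · intro hC
        rcases hC with ⟨h1, h2, h3⟩ | ⟨h1, h2, h3⟩
        · exact hearv1.1 (honly e.1 hee.1 (by omega) (by omega))
        · exact hearv1.2 (honly e.2 hee.2 (by omega) (by omega))
      · intro hC
        rcases hC with ⟨h1, h2, h3⟩ | ⟨h1, h2, h3⟩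
        · exact hearv1.2 (honly e.2 hee.2 (by omega) (by omega))
        · exact hearv1.1 (honly e.1 hee.1 (by omega) (by omega))
    have hGD' : ∀ d ∈ insert (a, v2) D, GDiag Y d := by
      intro d hd'
      rcases Finset.mem_insert.mp hd' with rfl | hd'
      · exact hGDnew
      · exact hGD d hd'
    have hNC' : ∀ d ∈ insert (a, v2) D, ∀ e ∈ insert (a, v2) D, ¬ Crosses d e := by
      intro d hd' e he'
      rcases Finset.mem_insert.mp hd' with rfl | hd' <;>
        rcases Finset.mem_insert.mp he' with rfl | he'
      · intro hC; rcases hC with ⟨h1, _⟩ | ⟨h1, _⟩ <;> simp at h1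
      · exact (hNCnew e he').1
      · exact (hNCnew d hd').2
      · exact hNC d hd' e he'
    have hble := bound Y.card Y (insert (a, v2) D) le_rfl hGD' hNC'
    rw [Finset.card_insert_of_notMem hnotin] at hble
    omega
  obtain ⟨v, hv⟩ := Finset.card_eq_one.mp hB1
  have hvB : v ∈ B := by rw [hv]; exact Finset.mem_singleton_self v
  obtain ⟨hvY, hav, hvb⟩ := hBmem _ hvB
  refine ⟨a, v, b, hd0, ha, hvY, hb, hav, hvb, ?_, fun e he => hEar v hvY hav hvb e he⟩
  intro z hzY h1 h2
  have : z ∈ B := by rw [hB, Finset.mem_filter]; exact ⟨hzY, h1, h2⟩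
  rw [hv, Finset.mem_singleton] at this
  exact this
end Stmt4Aux
namespace Stmt4Aux

lemma intern_card (Y : Finset ℕ) : (intern Y).card = Y.card - 2 := by
  by_cases h2 : 2 ≤ Y.card
  · have hne : Y.Nonempty := Finset.card_pos.mp (by omega)
    have hmm : Y.min' hne < Y.max' hne := Finset.min'_lt_max'_of_card Y (by omega)
    have heq : intern Y = (Y.erase (Y.min' hne)).erase (Y.max' hne) := by
      ext v
      rw [intern, Finset.mem_filter, Finset.mem_erase, Finset.mem_erase]
      constructor
      · rintro ⟨hvY, ⟨p, hpY, hp⟩, ⟨s, hsY, hs⟩⟩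
        refine ⟨?_, ?_, hvY⟩
        · have := Finset.le_max' Y s hsY
          omega
        · have := Finset.min'_le Y p hpY
          omega
      · rintro ⟨hM, hm, hvY⟩
        have h1 := Finset.min'_le Y v hvY
        have h2 := Finset.le_max' Y v hvY
        exact ⟨hvY, ⟨Y.min' hne, Finset.min'_mem _ _, by omega⟩,
          ⟨Y.max' hne, Finset.max'_mem _ _, by omega⟩⟩
    rw [heq, Finset.card_erase_of_mem, Finset.card_erase_of_mem (Finset.min'_mem _ _)]
    · omega
    · exact Finset.mem_erase.mpr ⟨by omega, Finset.max'_mem _ _⟩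
  · have hemp : intern Y = ∅ := by
      rw [Finset.eq_empty_iff_forall_notMem]
      intro v hv
      have := card3_of_intern hv
      omega
    rw [hemp, Finset.card_empty]
    omega

lemma intern_erase {Y : Finset ℕ} {v : ℕ} (hvI : v ∈ intern Y) :
    intern (Y.erase v) = (intern Y).erase v := by
  rw [intern, Finset.mem_filter] at hvI
  obtain ⟨hvY, ⟨a, haY, hav⟩, ⟨b, hbY, hvb⟩⟩ := hvI
  ext w
  rw [intern, intern, Finset.mem_erase, Finset.mem_filter, Finset.mem_filter,
    Finset.mem_erase]
  constructor
  · rintro ⟨⟨hwv, hwY⟩, ⟨p, hp, hplt⟩, ⟨s, hs, hslt⟩⟩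
    exact ⟨hwv, hwY, ⟨p, Finset.mem_of_mem_erase hp, hplt⟩,
      ⟨s, Finset.mem_of_mem_erase hs, hslt⟩⟩
  · rintro ⟨hwv, hwY, ⟨p, hpY, hplt⟩, ⟨s, hsY, hslt⟩⟩
    refine ⟨⟨hwv, hwY⟩, ?_, ?_⟩
    · by_cases hpv : p = v
      · exact ⟨a, Finset.mem_erase.mpr ⟨by omega, haY⟩, by omega⟩
      · exact ⟨p, Finset.mem_erase.mpr ⟨hpv, hpY⟩, hplt⟩
    · by_cases hsv : s = v
      · exact ⟨b, Finset.mem_erase.mpr ⟨by omega, hbY⟩, by omega⟩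
      · exact ⟨s, Finset.mem_erase.mpr ⟨hsv, hsY⟩, hslt⟩

lemma predIn_eq {Y : Finset ℕ} {a v : ℕ} (ha : a ∈ Y) (hav : a < v)
    (hmax : ∀ z ∈ Y, z < v → z ≤ a) : predIn Y v = a := by
  have h1 : (a : WithBot ℕ) ≤ (Y.filter (· < v)).max :=
    Finset.le_max (Finset.mem_filter.mpr ⟨ha, hav⟩)
  have h2 : (Y.filter (· < v)).max ≤ (a : WithBot ℕ) := by
    apply Finset.max_le
    intro z hz
    rw [Finset.mem_filter] at hz
    exact WithBot.coe_le_coe.mpr (hmax z hz.1 hz.2)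
  rw [predIn, le_antisymm h2 h1]
  rfl

lemma succIn_eq {Y : Finset ℕ} {b v : ℕ} (hb : b ∈ Y) (hvb : v < b)
    (hmin : ∀ z ∈ Y, v < z → b ≤ z) : succIn Y v = b := by
  have h1 : (Y.filter (v < ·)).min ≤ (b : WithTop ℕ) :=
    Finset.min_le (Finset.mem_filter.mpr ⟨hb, hvb⟩)
  have h2 : (b : WithTop ℕ) ≤ (Y.filter (v < ·)).min := by
    apply Finset.le_min
    intro z hz
    rw [Finset.mem_filter] at hz
    exact WithTop.coe_le_coe.mpr (hmin z hz.1 hz.2)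
  rw [succIn, le_antisymm h1 h2]
  rfl

lemma phiAux_cons (v w : ℕ) (t : List ℕ) (Y : Finset ℕ) :
    phiAux (v :: w :: t) Y = insert (predIn Y v, succIn Y v) (phiAux (w :: t) (Y.erase v)) :=
  rfl

lemma main : ∀ (k : ℕ) (Y : Finset ℕ) (D : Finset (ℕ × ℕ)), Y.card ≤ k → GTri Y D →
    ∃ l : List ℕ, l.Nodup ∧ l.toFinset = intern Y ∧ phiAux l Y = D := by
  intro k
  induction k with
  | zero =>
    intro Y D hk hT
    have hD : D = ∅ := Finset.card_eq_zero.mp (by have := hT.2.2; omega)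
    have hI : intern Y = ∅ := by
      rw [← Finset.card_eq_zero, intern_card]; omega
    exact ⟨[], List.nodup_nil, by simp [hI], by simp [phiAux, hD]⟩
  | succ k ih =>
    intro Y D hk hT
    by_cases h4 : 4 ≤ Y.card
    · -- inductive step: cut off an ear
      obtain ⟨a, v, b, habD, ha, hvY, hb, hav, hvb, huniq, hear⟩ := key hT h4
      obtain ⟨hGD, hNC, hcard⟩ := hT
      have hpred : predIn Y v = a := by
        apply predIn_eq ha hav
        intro z hz hzv
        by_contra hza
        have := huniq z hz (by omega) (by omega)
        omega
      have hsucc : succIn Y v = b := by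
        apply succIn_eq hb hvb
        intro z hz hvz
        by_contra hzb
        have := huniq z hz (by omega) (by omega)
        omega
      have hvI : v ∈ intern Y := by
        rw [intern, Finset.mem_filter]
        exact ⟨hvY, ⟨a, ha, hav⟩, ⟨b, hb, hvb⟩⟩
      -- the reduced triangulation
      have hT' : GTri (Y.erase v) (D.erase (a, b)) := by
        refine ⟨?_, ?_, ?_⟩
        · intro e he
          obtain ⟨hne, heD⟩ := Finset.mem_erase.mp he
          obtain ⟨h1Y, h2Y, hlt, ⟨z, hzY, hz1, hz2⟩, hwrapE⟩ := hGD e heD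
          have heare := hear e heD
          refine ⟨Finset.mem_erase.mpr ⟨heare.1, h1Y⟩, Finset.mem_erase.mpr ⟨heare.2, h2Y⟩,
            hlt, ?_, ?_⟩
          · by_cases hzv : z = v
            · -- e.1 < v < e.2; show e.1 ≤ a and b ≤ e.2
              subst hzv
              have he1a : e.1 ≤ a := by
                by_contra hlt'
                have := huniq e.1 h1Y (by omega) (by omega)
                omega
              have he2b : b ≤ e.2 := by
                by_contra hlt'
                have := huniq e.2 h2Y (by omega) (by omega)
                omega
              have hne' : ¬(e.1 = a ∧ e.2 = b) := by
                intro ⟨u, w⟩; exact hne (Prod.ext_iff.mpr ⟨u, w⟩)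
              by_cases he1 : e.1 = a
              · exact ⟨b, Finset.mem_erase.mpr ⟨by omega, hb⟩, by omega, by omega⟩
              · exact ⟨a, Finset.mem_erase.mpr ⟨by omega, ha⟩, by omega, by omega⟩
            · exact ⟨z, Finset.mem_erase.mpr ⟨hzv, hzY⟩, hz1, hz2⟩
          · rcases hwrapE with ⟨w, hwY, hw⟩ | ⟨w, hwY, hw⟩
            · by_cases hwv : w = v
              · exact Or.inl ⟨a, Finset.mem_erase.mpr ⟨by omega, ha⟩, by omega⟩
              · exact Or.inl ⟨w, Finset.mem_erase.mpr ⟨hwv, hwY⟩, hw⟩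
            · by_cases hwv : w = v
              · exact Or.inr ⟨b, Finset.mem_erase.mpr ⟨by omega, hb⟩, by omega⟩
              · exact Or.inr ⟨w, Finset.mem_erase.mpr ⟨hwv, hwY⟩, hw⟩
        · intro d hd e he
          exact hNC d (Finset.mem_of_mem_erase hd) e (Finset.mem_of_mem_erase he)
        · rw [Finset.card_erase_of_mem habD, Finset.card_erase_of_mem hvY]
          omega
      have hkY : (Y.erase v).card ≤ k := by
        rw [Finset.card_erase_of_mem hvY]; omega
      obtain ⟨l', hnd', htf', hphi'⟩ := ih (Y.erase v) (D.erase (a, b)) hkY hT'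
      have hl'ne : l' ≠ [] := by
        intro h
        have hc : (intern (Y.erase v)).card = 0 := by
          rw [← htf', h]; simp
        rw [intern_card, Finset.card_erase_of_mem hvY] at hc
        omega
      obtain ⟨w, t, rfl⟩ := List.exists_cons_of_ne_nil hl'ne
      have hvnot : v ∉ (w :: t) := by
        intro hmem
        have : v ∈ intern (Y.erase v) := by
          rw [← htf']; exact List.mem_toFinset.mpr hmem
        rw [intern_erase hvI, Finset.mem_erase] at this
        exact this.1 rfl
      refine ⟨v :: w :: t, List.nodup_cons.mpr ⟨hvnot, hnd'⟩, ?_, ?_⟩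
      · rw [List.toFinset_cons, htf', intern_erase hvI, Finset.insert_erase hvI]
      · rw [phiAux_cons, hpred, hsucc, hphi', Finset.insert_erase habD]
    · -- base: at most 3 vertices, no diagonals
      have hD : D = ∅ := Finset.card_eq_zero.mp (by have := hT.2.2; omega)
      by_cases h3 : Y.card = 3
      · have hc1 : (intern Y).card = 1 := by rw [intern_card]; omega
        obtain ⟨m, hm⟩ := Finset.card_eq_one.mp hc1
        exact ⟨[m], List.nodup_singleton m, by simp [hm], by simp [phiAux, hD]⟩
      · have hI : intern Y = ∅ := by
          rw [← Finset.card_eq_zero, intern_card]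
          have : Y.card ≤ 3 := by omega
          omega
        exact ⟨[], List.nodup_nil, by simp [hI], by simp [phiAux, hD]⟩

end Stmt4Aux
/-- The map `φ` from permutations of `{x_1 < … < x_n}` to triangulations of the
`(n+2)`-gon is surjective. -/
theorem stmt4 (n : ℕ) (D : Finset (ℕ × ℕ)) (hD : IsTriangulation n D) :
    ∃ l : List ℕ, l.Perm ((List.range n).map (· + 1)) ∧ phiT n l = D := by
  obtain ⟨hdiag, hNC, hcard⟩ := hD
  have hGT : Stmt4Aux.GTri (Finset.range (n + 2)) D := by
    refine ⟨?_, hNC, ?_⟩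
    · intro d hd
      obtain ⟨h1, h2, h3, h4⟩ := hdiag d hd
      refine ⟨Finset.mem_range.mpr (by omega), Finset.mem_range.mpr (by omega),
        h1, ⟨d.1 + 1, Finset.mem_range.mpr (by omega), by omega, by omega⟩, ?_⟩
      by_cases hd1 : d.1 = 0
      · refine Or.inr ⟨n + 1, Finset.mem_range.mpr (by omega), by omega⟩
      · exact Or.inl ⟨0, Finset.mem_range.mpr (by omega), by omega⟩
    · rw [Finset.card_range]; omega
  obtain ⟨l, hnd, htf, hphi⟩ := Stmt4Aux.main (n + 2) (Finset.range (n + 2)) D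
    (by rw [Finset.card_range]) hGT
  have hmnd : ((List.range n).map (· + 1)).Nodup :=
    (List.nodup_range (n := n)).map (fun a b h => by omega)
  have htf2 : ((List.range n).map (· + 1)).toFinset = Stmt4Aux.intern (Finset.range (n + 2)) := by
    ext v
    rw [List.mem_toFinset, List.mem_map, Stmt4Aux.intern, Finset.mem_filter]
    constructor
    · rintro ⟨i, hi, rfl⟩
      rw [List.mem_range] at hi
      exact ⟨Finset.mem_range.mpr (by omega),
        ⟨0, Finset.mem_range.mpr (by omega), by omega⟩,
        ⟨n + 1, Finset.mem_range.mpr (by omega), by omega⟩⟩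
    · rintro ⟨hv, ⟨p, hp, hplt⟩, ⟨s, hs, hslt⟩⟩
      rw [Finset.mem_range] at hv hs
      exact ⟨v - 1, List.mem_range.mpr (by omega), by omega⟩
  exact ⟨l, List.perm_of_nodup_nodup_toFinset_eq hnd hmnd (htf.trans htf2.symm), hphi⟩
end

section
/- Let σ be a permutation of X = {x_1 < ... < x_n} and T = φ(σ) the associated triangulation; for each i, let t_i be the third vertex of the unique face of T containing the edge {x_i, x_{i+1}}. Then x_i appears to the left of x_{i+1} in σ if and only if t_i < x_i. -/
open scoped Classical

lemma foldl_erase_mem' {l : List ℕ} {Y : Finset ℕ} {x : ℕ} :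
    x ∈ l.foldl Finset.erase Y ↔ x ∈ Y ∧ x ∉ l := by
  induction l generalizing Y with
  | nil => simp
  | cons a l ih =>
    simp only [List.foldl_cons, ih, Finset.mem_erase, List.mem_cons]
    tauto

lemma predIn_spec' {Y : Finset ℕ} {v : ℕ} (h : ∃ a ∈ Y, a < v) :
    predIn Y v ∈ Y ∧ predIn Y v < v ∧ ∀ y ∈ Y, y < v → y ≤ predIn Y v := by
  obtain ⟨a, ha, hav⟩ := h
  have hS : (Y.filter (· < v)).Nonempty := ⟨a, Finset.mem_filter.2 ⟨ha, hav⟩⟩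
  have hmax : predIn Y v = (Y.filter (· < v)).max' hS := by
    simp [predIn, ← Finset.coe_max' hS, WithBot.unbotD_coe]
  have hm := Finset.max'_mem _ hS
  rw [Finset.mem_filter] at hm
  refine ⟨hmax ▸ hm.1, hmax ▸ hm.2, fun y hy hyv => ?_⟩
  rw [hmax]
  exact Finset.le_max' (Y.filter (· < v)) y (Finset.mem_filter.2 ⟨hy, hyv⟩)

lemma succIn_spec' {Y : Finset ℕ} {v : ℕ} (h : ∃ a ∈ Y, v < a) :
    succIn Y v ∈ Y ∧ v < succIn Y v ∧ ∀ y ∈ Y, v < y → succIn Y v ≤ y := by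
  obtain ⟨a, ha, hav⟩ := h
  have hS : (Y.filter (v < ·)).Nonempty := ⟨a, Finset.mem_filter.2 ⟨ha, hav⟩⟩
  have hmin : succIn Y v = (Y.filter (v < ·)).min' hS := by
    rw [succIn, ← Finset.coe_min' hS, WithTop.untopD_coe]
  have hm := Finset.min'_mem _ hS
  rw [Finset.mem_filter] at hm
  refine ⟨hmin ▸ hm.1, hmin ▸ hm.2, fun y hy hyv => ?_⟩
  rw [hmin]
  exact Finset.min'_le (Y.filter (v < ·)) y (Finset.mem_filter.2 ⟨hy, hyv⟩)

lemma phiAux_cons' (v : ℕ) (l : List ℕ) (hl : l ≠ []) (Y : Finset ℕ) :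
    phiAux (v :: l) Y = insert (predIn Y v, succIn Y v) (phiAux l (Y.erase v)) := by
  cases l with
  | nil => simp at hl
  | cons x t => rfl

lemma phiAux_mem' {M : ℕ} : ∀ (l : List ℕ) (Y : Finset ℕ),
    0 ∈ Y → M ∈ Y → (∀ v ∈ l, v ∈ Y ∧ 0 < v ∧ v < M) → l.Nodup →
    ∀ d ∈ phiAux l Y, d.1 ∈ Y ∧ d.2 ∈ Y ∧ d.1 < d.2
  | [], Y, _, _, _, _ => by simp [phiAux]
  | [x], Y, _, _, _, _ => by simp [phiAux]
  | v :: x :: rest, Y, h0, hM, hl, hnd => by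
    intro d hd
    have hv := hl v (by simp)
    have hpe := predIn_spec' (Y := Y) (v := v) ⟨0, h0, hv.2.1⟩
    have hse := succIn_spec' (Y := Y) (v := v) ⟨M, hM, hv.2.2⟩
    rw [phiAux_cons' v (x :: rest) (by simp) Y] at hd
    rcases Finset.mem_insert.1 hd with h | h
    · rw [h]
      exact ⟨hpe.1, hse.1, lt_trans hpe.2.1 hse.2.1⟩
    · have h0' : (0 : ℕ) ∈ Y.erase v := Finset.mem_erase.2 ⟨by omega, h0⟩
      have hM' : M ∈ Y.erase v := Finset.mem_erase.2 ⟨by omega, hM⟩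
      have hl' : ∀ w ∈ x :: rest, w ∈ Y.erase v ∧ 0 < w ∧ w < M := by
        intro w hw
        have := hl w (List.mem_cons_of_mem _ hw)
        refine ⟨Finset.mem_erase.2 ⟨?_, this.1⟩, this.2⟩
        rintro rfl
        exact (List.nodup_cons.1 hnd).1 hw
      have := phiAux_mem' (x :: rest) (Y.erase v) h0' hM' hl' (List.nodup_cons.1 hnd).2 d h
      exact ⟨Finset.mem_of_mem_erase this.1, Finset.mem_of_mem_erase this.2.1, this.2.2⟩

lemma phiAux_noncross' {M : ℕ} : ∀ (l : List ℕ) (Y : Finset ℕ),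
    0 ∈ Y → M ∈ Y → (∀ v ∈ l, v ∈ Y ∧ 0 < v ∧ v < M) → l.Nodup →
    ∀ d ∈ phiAux l Y, ∀ e ∈ phiAux l Y, ¬ Crosses d e
  | [], Y, _, _, _, _ => by simp [phiAux]
  | [x], Y, _, _, _, _ => by simp [phiAux]
  | v :: x :: rest, Y, h0, hM, hl, hnd => by
    intro d hd e he
    have hv := hl v (by simp)
    have hpe := predIn_spec' (Y := Y) (v := v) ⟨0, h0, hv.2.1⟩
    have hse := succIn_spec' (Y := Y) (v := v) ⟨M, hM, hv.2.2⟩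
    have h0' : (0 : ℕ) ∈ Y.erase v := Finset.mem_erase.2 ⟨by omega, h0⟩
    have hM' : M ∈ Y.erase v := Finset.mem_erase.2 ⟨by omega, hM⟩
    have hl' : ∀ w ∈ x :: rest, w ∈ Y.erase v ∧ 0 < w ∧ w < M := by
      intro w hw
      have := hl w (List.mem_cons_of_mem _ hw)
      refine ⟨Finset.mem_erase.2 ⟨?_, this.1⟩, this.2⟩
      rintro rfl
      exact (List.nodup_cons.1 hnd).1 hw
    have hnd' := (List.nodup_cons.1 hnd).2
    -- no element of Y.erase v lies strictly between predIn Y v and succIn Y v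
    have hgap : ∀ y ∈ Y.erase v, ¬ (predIn Y v < y ∧ y < succIn Y v) := by
      rintro y hy ⟨h1, h2⟩
      rcases Finset.mem_erase.1 hy with ⟨hyv, hyY⟩
      rcases lt_trichotomy y v with h | h | h
      · exact absurd (hpe.2.2 y hyY h) (by omega)
      · exact hyv h
      · exact absurd (hse.2.2 y hyY h) (by omega)
    rw [phiAux_cons' v (x :: rest) (by simp) Y] at hd he
    rcases Finset.mem_insert.1 hd with h1 | h1 <;> rcases Finset.mem_insert.1 he with h2 | h2
    · subst h1 h2
      rintro (⟨h, _, _⟩ | ⟨h, _, _⟩) <;> exact lt_irrefl _ h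
    · subst h1
      have hmem := phiAux_mem' (M := M) (x :: rest) (Y.erase v) h0' hM' hl' hnd' e h2
      rintro (⟨c1, c2, c3⟩ | ⟨c1, c2, c3⟩)
      · exact hgap e.1 hmem.1 ⟨c1, by omega⟩
      · exact hgap e.2 hmem.2.1 ⟨by omega, c3⟩
    · subst h2
      have hmem := phiAux_mem' (M := M) (x :: rest) (Y.erase v) h0' hM' hl' hnd' d h1
      rintro (⟨c1, c2, c3⟩ | ⟨c1, c2, c3⟩)
      · exact hgap d.2 hmem.2.1 ⟨by omega, c3⟩
      · exact hgap d.1 hmem.1 ⟨c1, by omega⟩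
    · exact phiAux_noncross' (x :: rest) (Y.erase v) h0' hM' hl' hnd' d h1 e h2

lemma phiAux_insert_mem' : ∀ (u : List ℕ) (Y : Finset ℕ) (v : ℕ) (r : List ℕ), r ≠ [] →
    (predIn (u.foldl Finset.erase Y) v, succIn (u.foldl Finset.erase Y) v)
      ∈ phiAux (u ++ v :: r) Y
  | [], Y, v, r, hr => by
    rw [List.nil_append, List.foldl_nil, phiAux_cons' v r hr Y]
    exact Finset.mem_insert_self _ _
  | a :: u, Y, v, r, hr => by
    rw [List.cons_append, phiAux_cons' a (u ++ v :: r) (by simp) Y, List.foldl_cons]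
    exact Finset.mem_insert_of_mem (phiAux_insert_mem' u (Y.erase a) v r hr)

lemma indexOf_append_lt {a b : ℕ} : ∀ (u : List ℕ) (r : List ℕ), a ∉ u → b ∉ u → b ≠ a →
    (u ++ a :: r).idxOf a < (u ++ a :: r).idxOf b
  | [], r, _, _, hab => by
    simp only [List.nil_append, List.idxOf_cons_self, List.idxOf_cons_ne r (Ne.symm hab)]
    omega
  | c :: u, r, ha, hb, hab => by
    have hca : c ≠ a := fun h => ha (h ▸ List.mem_cons_self (a := c) (l := u))
    have hcb : c ≠ b := fun h => hb (h ▸ List.mem_cons_self (a := c) (l := u))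
    rw [List.cons_append, List.idxOf_cons_ne _ hca, List.idxOf_cons_ne _ hcb]
    have := indexOf_append_lt (a := a) (b := b) u r (fun h => ha (List.mem_cons_of_mem _ h))
      (fun h => hb (List.mem_cons_of_mem _ h)) hab
    omega

/-- Let `T = φ(σ)` and let `t_i` be the third vertex of the unique face of `T`
containing the edge `{x_i, x_{i+1}}`. Then `x_i` appears to the left of `x_{i+1}`
in `σ` if and only if `t_i < x_i`. -/
theorem stmt5 (n : ℕ) (l : List ℕ) (hl : l.Perm ((List.range n).map (· + 1)))
    (i : ℕ) (hi1 : 1 ≤ i) (hi2 : i + 1 ≤ n) (t : ℕ)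
    (ht : FaceOnEdge n (phiT n l) i t) :
    l.idxOf i < l.idxOf (i + 1) ↔ t < i := by
  have htarget : ((List.range n).map (· + 1)).Nodup :=
    List.Nodup.map (fun a b h => by omega) (List.nodup_range (n := n))
  have hnd : l.Nodup := hl.symm.nodup htarget
  have hmem : ∀ v, v ∈ l ↔ 1 ≤ v ∧ v ≤ n := by
    intro v
    rw [hl.mem_iff]
    simp only [List.mem_map, List.mem_range]
    constructor
    · rintro ⟨j, hj, rfl⟩; omega
    · rintro ⟨h1, h2⟩; exact ⟨v - 1, by omega, by omega⟩
  have hi_l : i ∈ l := (hmem i).2 ⟨hi1, by omega⟩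
  have hi1_l : i + 1 ∈ l := (hmem (i + 1)).2 ⟨by omega, hi2⟩
  obtain ⟨u, r, rfl⟩ := List.append_of_mem hi_l
  have hsplit := List.nodup_append.1 hnd
  have hiu : i ∉ u := fun h => hsplit.2.2 _ h _ List.mem_cons_self rfl
  have hDeq : phiT n (u ++ i :: r) = phiAux (u ++ i :: r) (Finset.range (n + 2)) := rfl
  have hlv : ∀ v ∈ u ++ i :: r, v ∈ Finset.range (n + 2) ∧ 0 < v ∧ v < n + 1 := by
    intro v hv
    have := (hmem v).1 hv
    exact ⟨Finset.mem_range.2 (by omega), by omega, by omega⟩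
  have hNC := phiAux_noncross' (M := n + 1) (u ++ i :: r) (Finset.range (n + 2))
    (Finset.mem_range.2 (by omega)) (Finset.mem_range.2 (by omega)) hlv hnd
  have hnotu : ∀ v, v ∈ u → 1 ≤ v ∧ v ≤ n := fun v hv => (hmem v).1 (List.mem_append_left _ hv)
  rcases List.mem_append.1 hi1_l with hi1u | hi1r
  · -- i+1 appears before i
    obtain ⟨u₁, u₂, rfl⟩ := List.append_of_mem hi1u
    have heq : (u₁ ++ (i + 1) :: u₂) ++ i :: r = u₁ ++ (i + 1) :: (u₂ ++ i :: r) := by simp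
    set Y' := u₁.foldl Finset.erase (Finset.range (n + 2)) with hY'def
    have hY' : ∀ x, x ∈ Y' ↔ x ∈ Finset.range (n + 2) ∧ x ∉ u₁ := fun x => foldl_erase_mem'
    have hiu₁ : i ∉ u₁ := fun h => hiu (List.mem_append_left _ h)
    have hundup := List.nodup_append.1 hsplit.1
    have hi1u₁ : i + 1 ∉ u₁ := fun h => hundup.2.2 _ h _ List.mem_cons_self rfl
    have h0Y : 0 ∈ Y' := (hY' 0).2 ⟨Finset.mem_range.2 (by omega),
      fun h => by have := hnotu 0 (List.mem_append_left _ h); omega⟩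
    have hMY : n + 1 ∈ Y' := (hY' (n + 1)).2 ⟨Finset.mem_range.2 (by omega),
      fun h => by have := hnotu (n + 1) (List.mem_append_left _ h); omega⟩
    have hiY : i ∈ Y' := (hY' i).2 ⟨Finset.mem_range.2 (by omega), hiu₁⟩
    have hps := predIn_spec' (Y := Y') (v := i + 1) ⟨i, hiY, by omega⟩
    have hpred : predIn Y' (i + 1) = i := by
      have := hps.2.2 i hiY (by omega)
      omega
    have hss := succIn_spec' (Y := Y') (v := i + 1) ⟨n + 1, hMY, by omega⟩
    have hd := phiAux_insert_mem' u₁ (Finset.range (n + 2)) (i + 1) (u₂ ++ i :: r) (by simp)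
    rw [hpred, ← hY'def] at hd
    rw [show u₁ ++ (i + 1) :: (u₂ ++ i :: r) = (u₁ ++ (i + 1) :: u₂) ++ i :: r by simp] at hd
    have hnt : ¬ t < i := by
      intro hti
      rcases ht with ⟨h1, hf⟩ | ⟨h1, hf⟩
      · obtain ⟨-, -, -, -, het⟩ := hf
        obtain ⟨-, -, hc⟩ := het
        rcases hc with hc | hc | hc
        · omega
        · omega
        · rw [hDeq] at hc
          exact hNC _ hc _ hd (Or.inl ⟨h1, by omega, hss.2.1⟩)
      · omega
    have hidx := indexOf_append_lt (a := i + 1) (b := i) u₁ (u₂ ++ i :: r) hi1u₁ hiu₁ (by omega)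
    rw [heq]
    exact iff_of_false (by omega) hnt
  · -- i appears before i+1
    have hi1rr : i + 1 ∈ r := by
      rcases List.mem_cons.1 hi1r with h | h
      · omega
      · exact h
    have hi1u : i + 1 ∉ u := fun h => hsplit.2.2 _ h _ hi1r rfl
    set Y' := u.foldl Finset.erase (Finset.range (n + 2)) with hY'def
    have hY' : ∀ x, x ∈ Y' ↔ x ∈ Finset.range (n + 2) ∧ x ∉ u := fun x => foldl_erase_mem'
    have h0Y : 0 ∈ Y' := (hY' 0).2 ⟨Finset.mem_range.2 (by omega),
      fun h => by have := hnotu 0 h; omega⟩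
    have hi1Y : i + 1 ∈ Y' := (hY' (i + 1)).2 ⟨Finset.mem_range.2 (by omega), hi1u⟩
    have hps := predIn_spec' (Y := Y') (v := i) ⟨0, h0Y, by omega⟩
    have hss := succIn_spec' (Y := Y') (v := i) ⟨i + 1, hi1Y, by omega⟩
    have hsucc : succIn Y' i = i + 1 := by
      have := hss.2.2 (i + 1) hi1Y (by omega)
      omega
    have hd := phiAux_insert_mem' u (Finset.range (n + 2)) i r
      (by rintro rfl; simp at hi1rr)
    rw [hsucc, ← hY'def] at hd
    have hti : t < i := by
      rcases ht with ⟨h1, -⟩ | ⟨h1, hf⟩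
      · exact h1
      · exfalso
        obtain ⟨-, -, -, -, het⟩ := hf
        obtain ⟨-, -, hc⟩ := het
        rcases hc with hc | hc | hc
        · omega
        · omega
        · rw [hDeq] at hc
          exact hNC _ hd _ hc (Or.inl ⟨hps.2.1, by omega, h1⟩)
    have hidx := indexOf_append_lt (a := i) (b := i + 1) u r hiu hi1u (by omega)
    exact iff_of_true hidx hti
end

section
/- Let σ = u x z v and σ' = u z x v be permutations of X (as standard words) with x < z, where v contains some letter y with x < y < z. Then φ(σ) = φ(σ'). -/
open scoped Classical

section PhiSwapAux

private lemma phiAux_cons_of_ne_nil (a : ℕ) (l : List ℕ) (hl : l ≠ []) (Y : Finset ℕ) :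
    phiAux (a :: l) Y = insert (predIn Y a, succIn Y a) (phiAux l (Y.erase a)) := by
  cases l with
  | nil => exact absurd rfl hl
  | cons b t => rfl

private lemma filter_lt_erase (Y : Finset ℕ) {x z : ℕ} (h : x ≤ z) :
    (Y.erase z).filter (· < x) = Y.filter (· < x) := by
  ext w
  simp only [Finset.mem_filter, Finset.mem_erase]
  constructor
  · rintro ⟨⟨_, hw⟩, h2⟩; exact ⟨hw, h2⟩
  · rintro ⟨hw, h2⟩; exact ⟨⟨by omega, hw⟩, h2⟩

private lemma filter_gt_erase (Y : Finset ℕ) {x z : ℕ} (h : x ≤ z) :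
    (Y.erase x).filter (z < ·) = Y.filter (z < ·) := by
  ext w
  simp only [Finset.mem_filter, Finset.mem_erase]
  constructor
  · rintro ⟨⟨_, hw⟩, h2⟩; exact ⟨hw, h2⟩
  · rintro ⟨hw, h2⟩; exact ⟨⟨by omega, hw⟩, h2⟩

private lemma min_erase_of_lt {S : Finset ℕ} {z y : ℕ} (hy : y ∈ S) (hyz : y < z) :
    (S.erase z).min = S.min := by
  apply le_antisymm
  · obtain ⟨m, hm⟩ := S.min_of_mem hy
    have hmS := Finset.mem_of_min hm
    have hmy : m ≤ y := Finset.min_le_of_eq hy hm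
    have hmem : m ∈ S.erase z := Finset.mem_erase.mpr ⟨by omega, hmS⟩
    calc (S.erase z).min ≤ m := Finset.min_le hmem
      _ = S.min := hm.symm
  · exact Finset.min_mono (Finset.erase_subset _ _)

private lemma max_erase_of_gt {S : Finset ℕ} {x y : ℕ} (hy : y ∈ S) (hxy : x < y) :
    (S.erase x).max = S.max := by
  apply le_antisymm
  · exact Finset.max_mono (Finset.erase_subset _ _)
  · obtain ⟨m, hm⟩ := S.max_of_mem hy
    have hmS := Finset.mem_of_max hm
    have hmy : y ≤ m := Finset.le_max_of_eq hy hm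
    have hmem : m ∈ S.erase x := Finset.mem_erase.mpr ⟨by omega, hmS⟩
    calc S.max = m := hm
      _ ≤ (S.erase x).max := Finset.le_max hmem

private lemma predIn_erase_high (Y : Finset ℕ) {x z : ℕ} (h : x ≤ z) :
    predIn (Y.erase z) x = predIn Y x := by
  unfold predIn
  rw [filter_lt_erase Y h]

private lemma succIn_erase_low (Y : Finset ℕ) {x z : ℕ} (h : x ≤ z) :
    succIn (Y.erase x) z = succIn Y z := by
  unfold succIn
  rw [filter_gt_erase Y h]

private lemma succIn_erase_high (Y : Finset ℕ) {x z y : ℕ} (hy : y ∈ Y) (hxy : x < y)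
    (hyz : y < z) : succIn (Y.erase z) x = succIn Y x := by
  unfold succIn
  have h1 : (Y.erase z).filter (x < ·) = (Y.filter (x < ·)).erase z := by
    ext w
    simp only [Finset.mem_filter, Finset.mem_erase]
    tauto
  rw [h1, min_erase_of_lt (Finset.mem_filter.mpr ⟨hy, hxy⟩) hyz]

private lemma predIn_erase_low (Y : Finset ℕ) {x z y : ℕ} (hy : y ∈ Y) (hxy : x < y)
    (hyz : y < z) : predIn (Y.erase x) z = predIn Y z := by
  unfold predIn
  have h1 : (Y.erase x).filter (· < z) = (Y.filter (· < z)).erase x := by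
    ext w
    simp only [Finset.mem_filter, Finset.mem_erase]
    tauto
  have hyS : y ∈ Y.filter (· < z) := Finset.mem_filter.mpr ⟨hy, hyz⟩
  rw [h1, max_erase_of_gt hyS hxy]

private lemma phiAux_swap_head {x z y : ℕ} (hxy : x < y) (hyz : y < z) (v : List ℕ)
    (hv : v ≠ []) (Y : Finset ℕ) (hy : y ∈ Y) :
    phiAux (x :: z :: v) Y = phiAux (z :: x :: v) Y := by
  have hxz : x ≤ z := by omega
  rw [phiAux_cons_of_ne_nil x (z :: v) (by simp) Y,
      phiAux_cons_of_ne_nil z v hv (Y.erase x),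
      phiAux_cons_of_ne_nil z (x :: v) (by simp) Y,
      phiAux_cons_of_ne_nil x v hv (Y.erase z)]
  rw [predIn_erase_low Y hy hxy hyz, succIn_erase_low Y hxz,
      predIn_erase_high Y hxz, succIn_erase_high Y hy hxy hyz]
  have herase : (Y.erase x).erase z = (Y.erase z).erase x := by
    ext w
    simp only [Finset.mem_erase]
    tauto
  rw [Finset.insert_comm, herase]

private lemma phiAux_swap_append (u : List ℕ) {x z y : ℕ} (hxy : x < y) (hyz : y < z)
    (v : List ℕ) (hv : v ≠ []) :
    ∀ Y : Finset ℕ, y ∈ Y → y ∉ u →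
      phiAux (u ++ x :: z :: v) Y = phiAux (u ++ z :: x :: v) Y := by
  induction u with
  | nil =>
    intro Y hy _
    exact phiAux_swap_head hxy hyz v hv Y hy
  | cons a u ih =>
    intro Y hy hyu
    have hne1 : u ++ x :: z :: v ≠ [] := by simp
    have hne2 : u ++ z :: x :: v ≠ [] := by simp
    rw [List.cons_append, List.cons_append,
        phiAux_cons_of_ne_nil a _ hne1 Y, phiAux_cons_of_ne_nil a _ hne2 Y]
    have hya : y ≠ a := by simp at hyu; tauto
    have hyu' : y ∉ u := by simp at hyu; tauto
    rw [ih (Y.erase a) (Finset.mem_erase.mpr ⟨hya, hy⟩) hyu']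

end PhiSwapAux

/-- If `σ = u x z v` and `σ' = u z x v` with `x < z` and `v` contains some letter `y`
with `x < y < z`, then `φ(σ) = φ(σ')`. -/
theorem stmt8 (n : ℕ) (u v : List ℕ) (x z : ℕ) (hxz : x < z)
    (hl : (u ++ [x, z] ++ v).Perm ((List.range n).map (· + 1)))
    (hv : ∃ y ∈ v, x < y ∧ y < z) :
    phiT n (u ++ [x, z] ++ v) = phiT n (u ++ [z, x] ++ v) := by
  obtain ⟨y, hyv, hxy, hyz⟩ := hv
  have hvne : v ≠ [] := by intro h; subst h; simp at hyv
  have hnd : (u ++ [x, z] ++ v).Nodup := by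
    refine hl.symm.nodup ?_
    exact (List.nodup_range (n := n)).map (fun a b => by omega)
  have hyu : y ∉ u := by
    rw [List.append_assoc, List.nodup_append] at hnd
    intro hy
    exact hnd.2.2 y hy y (by simp [hyv]) rfl
  have hyn : y ∈ Finset.range (n + 2) := by
    have hmem : y ∈ u ++ [x, z] ++ v := by simp [hyv]
    have := hl.mem_iff.mp hmem
    simp only [List.mem_map, List.mem_range] at this
    obtain ⟨m, hm, rfl⟩ := this
    simp only [Finset.mem_range]; omega
  unfold phiT
  have e1 : u ++ [x, z] ++ v = u ++ x :: z :: v := by simp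
  have e2 : u ++ [z, x] ++ v = u ++ z :: x :: v := by simp
  rw [e1, e2]
  exact phiAux_swap_append u hxy hyz v hvne (Finset.range (n + 2)) hyn hyu
end

section
/- The number of sylvester congruence classes of permutations in S_n equals the Catalan number c_n = (1/(n+1)) * binomial(2n, n). -/
open scoped Classical

namespace SylvProof

/-- Binary search tree insertion. -/
def ins (x : ℕ) : BinaryTree ℕ → BinaryTree ℕ
  | BinaryTree.nil => BinaryTree.node x BinaryTree.nil BinaryTree.nil
  | BinaryTree.node a l r => if x < a then BinaryTree.node a (ins x l) r else BinaryTree.node a l (ins x r)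

/-- Right-to-left BST insertion of a word. -/
def P (w : List ℕ) : BinaryTree ℕ := w.foldr ins BinaryTree.nil

def MemT (x : ℕ) : BinaryTree ℕ → Prop
  | BinaryTree.nil => False
  | BinaryTree.node a l r => x = a ∨ MemT x l ∨ MemT x r

def IsBST : BinaryTree ℕ → Prop
  | BinaryTree.nil => True
  | BinaryTree.node a l r =>
      (∀ y, MemT y l → y < a) ∧ (∀ y, MemT y r → a < y) ∧ IsBST l ∧ IsBST r

lemma memT_ins {y x : ℕ} : ∀ {T : BinaryTree ℕ}, MemT y (ins x T) ↔ y = x ∨ MemT y T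
  | BinaryTree.nil => by simp [ins, MemT]
  | BinaryTree.node a l r => by
      by_cases h : x < a
      · simp only [ins, if_pos h, MemT, @memT_ins y x l]; tauto
      · simp only [ins, if_neg h, MemT, @memT_ins y x r]; tauto

lemma isBST_ins {x : ℕ} : ∀ {T : BinaryTree ℕ}, IsBST T → ¬ MemT x T → IsBST (ins x T)
  | BinaryTree.nil, _, _ => by simp [ins, IsBST, MemT]
  | BinaryTree.node a l r, h, hx => by
      obtain ⟨hl, hr, hbl, hbr⟩ := h
      have hxa : x ≠ a := fun h' => hx (Or.inl h')
      have hxl : ¬ MemT x l := fun h' => hx (Or.inr (Or.inl h'))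
      have hxr : ¬ MemT x r := fun h' => hx (Or.inr (Or.inr h'))
      by_cases h : x < a
      · simp only [ins, if_pos h]
        refine ⟨fun y hy => ?_, hr, isBST_ins hbl hxl, hbr⟩
        rcases memT_ins.1 hy with rfl | hy
        · exact h
        · exact hl y hy
      · simp only [ins, if_neg h]
        refine ⟨hl, fun y hy => ?_, hbl, isBST_ins hbr hxr⟩
        rcases memT_ins.1 hy with rfl | hy
        · omega
        · exact hr y hy

lemma memT_P {y : ℕ} : ∀ {w : List ℕ}, MemT y (P w) ↔ y ∈ w
  | [] => by simp [P, MemT]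
  | x :: w => by
      simp only [P, List.foldr_cons, List.mem_cons]
      rw [show List.foldr ins BinaryTree.nil w = P w from rfl] at *
      rw [memT_ins, memT_P]

lemma isBST_P : ∀ {w : List ℕ}, w.Nodup → IsBST (P w)
  | [], _ => by simp [P, IsBST]
  | x :: w, h => by
      obtain ⟨hx, hw⟩ := List.nodup_cons.1 h
      exact isBST_ins (isBST_P hw) (fun h' => hx (memT_P.1 h'))

lemma ins_comm {x z : ℕ} : ∀ {T : BinaryTree ℕ} (y : ℕ), IsBST T → MemT y T →
    x < y → y < z → ¬ MemT x T → ¬ MemT z T → ins x (ins z T) = ins z (ins x T)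
  | BinaryTree.nil, y, _, hy, _, _, _, _ => hy.elim
  | BinaryTree.node a l r, y, hB, hy, hxy, hyz, hx, hz => by
      obtain ⟨hl, hr, hbl, hbr⟩ := hB
      have hxa : x ≠ a := fun h' => hx (Or.inl h')
      have hza : z ≠ a := fun h' => hz (Or.inl h')
      by_cases h1 : x < a <;> by_cases h2 : z < a
      · -- both left
        have hya : y ≠ a := fun h' => by omega
        have hyl : MemT y l := by
          rcases hy with rfl | hy | hy
          · omega
          · exact hy
          · exact absurd (hr _ hy) (by omega)
        have := ins_comm (x := x) (z := z) y hbl hyl hxy hyz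
          (fun h' => hx (Or.inr (Or.inl h'))) (fun h' => hz (Or.inr (Or.inl h')))
        simp [ins, if_pos h1, if_pos h2, this]
      · simp [ins, if_pos h1, if_neg h2]
      · omega
      · -- both right
        have hya : y ≠ a := by omega
        have hyr : MemT y r := by
          rcases hy with rfl | hy | hy
          · omega
          · exact absurd (hl _ hy) (by omega)
          · exact hy
        have := ins_comm (x := x) (z := z) y hbr hyr hxy hyz
          (fun h' => hx (Or.inr (Or.inr h'))) (fun h' => hz (Or.inr (Or.inr h')))
        simp [ins, if_neg h1, if_neg h2, this]

lemma sylvAdj_perm {w1 w2 : List ℕ} (h : SylvAdj w1 w2) : w1.Perm w2 := by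
  obtain ⟨u, u', u'', x, y, z, _, _, e1, e2⟩ := h
  subst e1; subst e2
  exact (List.Perm.append_left u (List.Perm.swap z x _))

lemma P_sylvAdj {w1 w2 : List ℕ} (h : SylvAdj w1 w2) (hnd : w1.Nodup) : P w1 = P w2 := by
  obtain ⟨u, u', u'', x, y, z, hxy, hyz, e1, e2⟩ := h
  subst e1; subst e2
  have key : ins x (ins z (P (u' ++ y :: u''))) = ins z (ins x (P (u' ++ y :: u''))) := by
    have hnd2 : (x :: z :: (u' ++ y :: u'')).Nodup := (List.nodup_append.1 hnd).2.1
    have hx : x ∉ (u' ++ y :: u'') := by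
      have := List.nodup_cons.1 hnd2
      exact fun h' => this.1 (List.mem_cons_of_mem _ h')
    have hz : z ∉ (u' ++ y :: u'') := by
      have := (List.nodup_cons.1 (List.nodup_cons.1 hnd2).2).1
      exact this
    have hxy' : x < y := by
      have hxney : x ≠ y := by
        rintro rfl
        exact hx (by simp)
      omega
    have hndv : (u' ++ y :: u'').Nodup :=
      (List.nodup_cons.1 (List.nodup_cons.1 hnd2).2).2
    exact ins_comm y (isBST_P hndv) (memT_P.2 (by simp)) hxy' hyz
      (fun h' => hx (memT_P.1 h')) (fun h' => hz (memT_P.1 h'))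
  show List.foldr ins BinaryTree.nil (u ++ x :: z :: (u' ++ y :: u''))
      = List.foldr ins BinaryTree.nil (u ++ z :: x :: (u' ++ y :: u''))
  rw [List.foldr_append, List.foldr_append, List.foldr_cons, List.foldr_cons,
    List.foldr_cons, List.foldr_cons]
  exact congrArg (fun t => List.foldr ins t u) key

/-- Canonical reading of a tree: left, right, root. -/
def canon : BinaryTree ℕ → List ℕ
  | BinaryTree.nil => []
  | BinaryTree.node a l r => canon l ++ canon r ++ [a]

/-- In-order reading. -/
def ino : BinaryTree ℕ → List ℕ
  | BinaryTree.nil => []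
  | BinaryTree.node a l r => ino l ++ a :: ino r

lemma mem_canon {x : ℕ} : ∀ {T : BinaryTree ℕ}, x ∈ canon T ↔ MemT x T
  | BinaryTree.nil => by simp [canon, MemT]
  | BinaryTree.node a l r => by
      simp [canon, MemT, @mem_canon x l, @mem_canon x r]; tauto

lemma mem_ino {x : ℕ} : ∀ {T : BinaryTree ℕ}, x ∈ ino T ↔ MemT x T
  | BinaryTree.nil => by simp [ino, MemT]
  | BinaryTree.node a l r => by
      simp [ino, MemT, @mem_ino x l, @mem_ino x r]; tauto

lemma length_ino : ∀ (T : BinaryTree ℕ), (ino T).length = T.numNodes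
  | BinaryTree.nil => rfl
  | BinaryTree.node a l r => by
      simp [ino, BinaryTree.numNodes, length_ino l, length_ino r]; omega

lemma sorted_ino : ∀ {T : BinaryTree ℕ}, IsBST T → (ino T).Pairwise (· < ·)
  | BinaryTree.nil, _ => List.Pairwise.nil
  | BinaryTree.node a l r, ⟨hl, hr, hbl, hbr⟩ => by
      rw [ino, List.pairwise_append]
      refine ⟨sorted_ino hbl, ?_, ?_⟩
      · rw [List.pairwise_cons]
        exact ⟨fun y hy => hr y (mem_ino.1 hy), sorted_ino hbr⟩
      · intro x hx y hy
        have h1 : x < a := hl x (mem_ino.1 hx)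
        rcases List.mem_cons.1 hy with rfl | hy
        · exact h1
        · exact h1.trans (hr y (mem_ino.1 hy))

lemma perm_ino_ins {x : ℕ} : ∀ {T : BinaryTree ℕ}, (ino (ins x T)).Perm (x :: ino T)
  | BinaryTree.nil => by simp [ins, ino]
  | BinaryTree.node a l r => by
      by_cases h : x < a
      · simp only [ins, if_pos h, ino]
        exact (perm_ino_ins (x := x) (T := l)).append_right _
      · simp only [ins, if_neg h, ino]
        have h1 := perm_ino_ins (x := x) (T := r)
        have h2 : (ino l ++ a :: ino (ins x r)).Perm (ino l ++ a :: x :: ino r) :=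
          ((h1.cons a)).append_left _
        refine h2.trans ?_
        have h3 : ino l ++ a :: x :: ino r = (ino l ++ [a]) ++ x :: ino r := by simp
        have h4 : x :: (ino l ++ a :: ino r) = x :: ((ino l ++ [a]) ++ ino r) := by simp
        rw [h3, h4]
        exact List.perm_middle

lemma perm_ino_P : ∀ {w : List ℕ}, (ino (P w)).Perm w
  | [] => by simp [P, ino]
  | x :: w => by
      have : P (x :: w) = ins x (P w) := rfl
      rw [this]
      exact perm_ino_ins.trans (perm_ino_P.cons x)

lemma perm_canon_ino : ∀ (T : BinaryTree ℕ), (canon T).Perm (ino T)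
  | BinaryTree.nil => List.Perm.refl _
  | BinaryTree.node a l r => by
      rw [canon, ino, List.append_assoc]
      refine (perm_canon_ino l).append ?_
      have h1 : (canon r ++ [a]).Perm (ino r ++ [a]) := (perm_canon_ino r).append_right _
      refine h1.trans ?_
      have h2 := List.perm_middle (a := a) (l₁ := ino r) (l₂ := ([] : List ℕ))
      simp only [List.append_nil] at h2; exact h2

lemma numNodes_ins {x : ℕ} : ∀ {T : BinaryTree ℕ}, (ins x T).numNodes = T.numNodes + 1
  | BinaryTree.nil => rfl
  | BinaryTree.node a l r => by
      by_cases h : x < a <;>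
        simp [ins, h, BinaryTree.numNodes, numNodes_ins (T := l), numNodes_ins (T := r)] <;> omega

lemma numNodes_P : ∀ {w : List ℕ}, (P w).numNodes = w.length
  | [] => rfl
  | x :: w => by
      have : P (x :: w) = ins x (P w) := rfl
      rw [this, numNodes_ins, numNodes_P]; rfl

/-- Splitting lemma for insertion of a word ending in `a`. -/
lemma P_concat : ∀ (w : List ℕ) (a : ℕ), a ∉ w →
    P (w ++ [a]) = BinaryTree.node a (P (w.filter (· < a))) (P (w.filter (fun b => a < b)))
  | [], a, _ => by simp [P, ins]
  | b :: w, a, h => by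
      have hba : b ≠ a := fun h' => h (by simp [h'])
      have hw : a ∉ w := fun h' => h (by simp [h'])
      have IH := P_concat w a hw
      have hP : P ((b :: w) ++ [a]) = ins b (P (w ++ [a])) := rfl
      rw [hP, IH]
      by_cases hb : b < a
      · rw [ins, if_pos hb]
        simp only [List.filter_cons]
        have h1 : decide (b < a) = true := by simpa using hb
        have h2 : decide (a < b) = false := by simp; omega
        rw [h1, h2]
        simp only [if_pos rfl]
        rfl
      · have hab : a < b := by omega
        rw [ins, if_neg (by omega)]
        simp only [List.filter_cons]
        have h1 : decide (b < a) = false := by simp; omega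
        have h2 : decide (a < b) = true := by simpa using hab
        rw [h1, h2]
        simp only [if_pos rfl]
        rfl

lemma sylvAdj_append_left (u : List ℕ) {w1 w2 : List ℕ} (h : SylvAdj w1 w2) :
    SylvAdj (u ++ w1) (u ++ w2) := by
  obtain ⟨U, u', u'', x, y, z, hxy, hyz, e1, e2⟩ := h
  exact ⟨u ++ U, u', u'', x, y, z, hxy, hyz, by simp [e1], by simp [e2]⟩

lemma sylvAdj_append_right (v : List ℕ) {w1 w2 : List ℕ} (h : SylvAdj w1 w2) :
    SylvAdj (w1 ++ v) (w2 ++ v) := by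
  obtain ⟨U, u', u'', x, y, z, hxy, hyz, e1, e2⟩ := h
  exact ⟨U, u', u'' ++ v, x, y, z, hxy, hyz, by simp [e1], by simp [e2]⟩

lemma sylvCong_append {u v w1 w2 : List ℕ} (h : SylvCong w1 w2) :
    SylvCong (u ++ w1 ++ v) (u ++ w2 ++ v) := by
  induction h with
  | rel a b hab =>
      exact Relation.EqvGen.rel _ _
        (sylvAdj_append_right v (sylvAdj_append_left u hab))
  | refl a => exact Relation.EqvGen.refl _
  | symm a b _ ih => exact Relation.EqvGen.symm _ _ ih
  | trans a b c _ _ ih1 ih2 => exact Relation.EqvGen.trans _ _ _ ih1 ih2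

lemma bubble_one (b a : ℕ) : ∀ (S p q : List ℕ), (∀ s ∈ S, s < a) → a < b →
    SylvCong (b :: (S ++ (p ++ a :: q))) (S ++ b :: (p ++ a :: q))
  | [], p, q, _, _ => Relation.EqvGen.refl _
  | s :: S, p, q, hS, hb => by
      have hsa : s < a := hS s List.mem_cons_self
      have step1 : SylvAdj (s :: b :: (S ++ (p ++ a :: q))) (b :: s :: (S ++ (p ++ a :: q))) :=
        ⟨[], S ++ p, q, s, a, b, by omega, hb, by simp, by simp⟩
      have step2 : SylvCong (b :: (S ++ (p ++ a :: q))) (S ++ b :: (p ++ a :: q)) :=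
        bubble_one b a S p q (fun x hx => hS x (List.mem_cons_of_mem _ hx)) hb
      have step2' : SylvCong (s :: (b :: (S ++ (p ++ a :: q)))) (s :: (S ++ b :: (p ++ a :: q))) := by
        have := sylvCong_append (u := [s]) (v := []) step2
        simpa using this
      exact Relation.EqvGen.trans _ _ _
        (Relation.EqvGen.symm _ _ (Relation.EqvGen.rel _ _ step1)) step2'

lemma bubble (a : ℕ) : ∀ (w : List ℕ), a ∉ w →
    SylvCong (w ++ [a]) (w.filter (· < a) ++ w.filter (fun b => a < b) ++ [a])
  | [], _ => Relation.EqvGen.refl _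
  | b :: w, h => by
      have hba : b ≠ a := fun h' => h (by simp [h'])
      have hw : a ∉ w := fun h' => h (by simp [h'])
      have IH := bubble a w hw
      have IH' : SylvCong (b :: (w ++ [a]))
          (b :: (w.filter (· < a) ++ w.filter (fun b => a < b) ++ [a])) := by
        have := sylvCong_append (u := [b]) (v := []) IH
        simpa using this
      by_cases hb : b < a
      · simp only [List.filter_cons]
        have h1 : decide (b < a) = true := by simpa using hb
        have h2 : decide (a < b) = false := by simp; omega
        rw [h1, h2]
        simpa using IH'
      · have hab : a < b := by omega
        simp only [List.filter_cons]
        have h1 : decide (b < a) = false := by simp; omega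
        have h2 : decide (a < b) = true := by simpa using hab
        rw [h1, h2]
        simp only [if_pos rfl]
        refine Relation.EqvGen.trans _ _ _ IH' ?_
        have hS : ∀ s ∈ w.filter (· < a), s < a := by
          intro s hs
          simpa using (List.mem_filter.1 hs).2
        have := bubble_one b a (w.filter (· < a)) (w.filter (fun b => a < b)) [] hS hab
        simpa [SylvCong] using this

lemma toCanon : ∀ (N : ℕ) (w : List ℕ), w.length ≤ N → w.Nodup → SylvCong w (canon (P w))
  | 0, w, hN, _ => by
      have : w = [] := List.length_eq_zero_iff.1 (by omega)
      subst this
      exact Relation.EqvGen.refl _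
  | (N + 1), w, hN, hnd => by
      rcases List.eq_nil_or_concat w with rfl | ⟨w', a, rfl⟩
      · exact Relation.EqvGen.refl _
      rw [List.concat_eq_append] at *
      have haw : a ∉ w' := by
        have := List.nodup_append.1 hnd
        intro h'
        exact this.2.2 a h' a (List.mem_singleton_self a) rfl
      have hlen : w'.length ≤ N := by
        rw [List.length_append] at hN; simpa using hN
      have hndw : w'.Nodup := (List.nodup_append.1 hnd).1
      set S := w'.filter (· < a) with hSdef
      set B := w'.filter (fun b => a < b) with hBdef
      have hPsplit : P (w' ++ [a]) = BinaryTree.node a (P S) (P B) := P_concat w' a haw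
      have hcanon : canon (P (w' ++ [a])) = canon (P S) ++ canon (P B) ++ [a] := by
        rw [hPsplit]; rfl
      have step1 : SylvCong (w' ++ [a]) (S ++ B ++ [a]) := bubble a w' haw
      have hSlen : S.length ≤ N := le_trans (List.length_filter_le _ _) hlen
      have hBlen : B.length ≤ N := le_trans (List.length_filter_le _ _) hlen
      have hSnd : S.Nodup := hndw.filter _
      have hBnd : B.Nodup := hndw.filter _
      have step2 : SylvCong (S ++ B ++ [a]) (canon (P S) ++ B ++ [a]) := by
        have := sylvCong_append (u := []) (v := B ++ [a]) (toCanon N S hSlen hSnd)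
        simpa [List.append_assoc] using this
      have step3 : SylvCong (canon (P S) ++ B ++ [a]) (canon (P S) ++ canon (P B) ++ [a]) := by
        have := sylvCong_append (u := canon (P S)) (v := [a]) (toCanon N B hBlen hBnd)
        simpa [List.append_assoc] using this
      rw [hcanon]
      exact Relation.EqvGen.trans _ _ _ step1 (Relation.EqvGen.trans _ _ _ step2 step3)

/-- Shape of a labeled tree. -/
def shape : BinaryTree ℕ → BinaryTree Unit
  | BinaryTree.nil => BinaryTree.nil
  | BinaryTree.node _ l r => BinaryTree.node () (shape l) (shape r)

lemma numNodes_shape : ∀ (T : BinaryTree ℕ), (shape T).numNodes = T.numNodes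
  | BinaryTree.nil => rfl
  | BinaryTree.node a l r => by
      simp [shape, BinaryTree.numNodes, numNodes_shape l, numNodes_shape r]

lemma eq_of_shape_ino : ∀ {T T' : BinaryTree ℕ}, shape T = shape T' → ino T = ino T' → T = T'
  | BinaryTree.nil, BinaryTree.nil, _, _ => rfl
  | BinaryTree.nil, BinaryTree.node a l r, h, _ => by simp [shape] at h
  | BinaryTree.node a l r, BinaryTree.nil, h, _ => by simp [shape] at h
  | BinaryTree.node a l r, BinaryTree.node a' l' r', hs, hi => by
      rw [shape, shape] at hs
      obtain ⟨-, hsl, hsr⟩ := BinaryTree.node.inj hs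
      rw [ino, ino] at hi
      have hlen : (ino l).length = (ino l').length := by
        rw [length_ino, length_ino, ← numNodes_shape l, ← numNodes_shape l', hsl]
      obtain ⟨hil, hir⟩ := List.append_inj hi hlen
      obtain ⟨rfl, hir'⟩ := List.cons.inj hir
      rw [eq_of_shape_ino hsl hil, eq_of_shape_ino hsr hir']

/-- In-order labeling of a shape, starting at `k`. -/
def lbl : BinaryTree Unit → ℕ → BinaryTree ℕ
  | BinaryTree.nil, _ => BinaryTree.nil
  | BinaryTree.node _ l r, k => BinaryTree.node (k + l.numNodes) (lbl l k) (lbl r (k + l.numNodes + 1))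

lemma shape_lbl : ∀ (s : BinaryTree Unit) (k : ℕ), shape (lbl s k) = s
  | BinaryTree.nil, _ => rfl
  | BinaryTree.node _ l r, k => by
      simp [lbl, shape, shape_lbl l, shape_lbl r]

lemma ino_lbl : ∀ (s : BinaryTree Unit) (k : ℕ), ino (lbl s k) = List.range' k s.numNodes
  | BinaryTree.nil, _ => rfl
  | BinaryTree.node _ l r, k => by
      rw [lbl, ino, ino_lbl l, ino_lbl r]
      have h1 : (k + l.numNodes) :: List.range' (k + l.numNodes + 1) r.numNodes
          = List.range' (k + l.numNodes) (r.numNodes + 1) := by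
        rw [List.range'_succ]
      rw [h1]
      have h2 := List.range'_append (s := k) (m := l.numNodes) (n := r.numNodes + 1) (step := 1)
      simp only [one_mul] at h2
      rw [h2]
      congr 1

lemma memT_lbl {x : ℕ} {s : BinaryTree Unit} {k : ℕ} :
    MemT x (lbl s k) ↔ k ≤ x ∧ x < k + s.numNodes := by
  rw [← mem_ino, ino_lbl, List.mem_range']
  constructor
  · rintro ⟨i, hi, rfl⟩; omega
  · intro h; exact ⟨x - k, by omega, by omega⟩

lemma isBST_lbl : ∀ (s : BinaryTree Unit) (k : ℕ), IsBST (lbl s k)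
  | BinaryTree.nil, _ => trivial
  | BinaryTree.node _ l r, k => by
      refine ⟨?_, ?_, isBST_lbl l k, isBST_lbl r (k + l.numNodes + 1)⟩
      · intro y hy
        have := memT_lbl.1 hy
        omega
      · intro y hy
        have := memT_lbl.1 hy
        omega

lemma P_canon : ∀ {T : BinaryTree ℕ}, IsBST T → P (canon T) = T
  | BinaryTree.nil, _ => rfl
  | BinaryTree.node a l r, ⟨hl, hr, hbl, hbr⟩ => by
      have hmem : a ∉ canon l ++ canon r := by
        intro h'
        rcases List.mem_append.1 h' with h' | h'
        · exact absurd (hl a (mem_canon.1 h')) (lt_irrefl a)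
        · exact absurd (hr a (mem_canon.1 h')) (lt_irrefl a)
      have : canon (BinaryTree.node a l r) = (canon l ++ canon r) ++ [a] := by
        rw [canon, List.append_assoc]
      rw [this, P_concat _ a hmem]
      have hfl : (canon l ++ canon r).filter (· < a) = canon l := by
        rw [List.filter_append]
        have e1 : (canon l).filter (· < a) = canon l :=
          List.filter_eq_self.2 (fun x hx => by simpa using hl x (mem_canon.1 hx))
        have e2 : (canon r).filter (· < a) = [] :=
          List.filter_eq_nil_iff.2 (fun x hx => by
            have := hr x (mem_canon.1 hx)
            simp only [decide_eq_true_eq]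
            omega)
        rw [e1, e2, List.append_nil]
      have hfr : (canon l ++ canon r).filter (fun b => a < b) = canon r := by
        rw [List.filter_append]
        have e1 : (canon l).filter (fun b => a < b) = [] :=
          List.filter_eq_nil_iff.2 (fun x hx => by
            have := hl x (mem_canon.1 hx)
            simp only [decide_eq_true_eq]
            omega)
        have e2 : (canon r).filter (fun b => a < b) = canon r :=
          List.filter_eq_self.2 (fun x hx => by simpa using hr x (mem_canon.1 hx))
        rw [e1, e2, List.nil_append]
      rw [hfl, hfr, P_canon hbl, P_canon hbr]

lemma range'_eq_map : ∀ (n k : ℕ), List.range' k n = (List.range n).map (· + k)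
  | 0, k => by simp
  | (n + 1), k => by
      rw [List.range'_succ, range'_eq_map n (k + 1), List.range_succ_eq_map]
      simp only [List.map_cons, Nat.zero_add, List.map_map]
      congr 1
      apply List.map_congr_left
      intro x _
      simp [Nat.succ_eq_add_one]
      omega

end SylvProof

namespace SylvProof

lemma transfer (L : List ℕ) : ∀ {w1 w2 : List ℕ}, SylvCong w1 w2 →
    (w1.Perm L ↔ w2.Perm L) ∧ ∀ (h1 : w1.Perm L) (h2 : w2.Perm L),
      Relation.EqvGen (fun (a b : {l : List ℕ // l.Perm L}) => SylvAdj a.1 b.1)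
        ⟨w1, h1⟩ ⟨w2, h2⟩ := by
  intro w1 w2 h
  induction h with
  | rel a b hab =>
      refine ⟨?_, fun h1 h2 => Relation.EqvGen.rel _ _ hab⟩
      have hp := sylvAdj_perm hab
      exact ⟨fun h' => hp.symm.trans h', fun h' => hp.trans h'⟩
  | refl a => exact ⟨Iff.rfl, fun h1 h2 => Relation.EqvGen.refl _⟩
  | symm a b _ ih => exact ⟨ih.1.symm, fun h1 h2 => Relation.EqvGen.symm _ _ (ih.2 h2 h1)⟩
  | trans a b c _ _ ih1 ih2 =>
      refine ⟨ih1.1.trans ih2.1, fun h1 h2 => ?_⟩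
      have hb := ih1.1.1 h1
      exact Relation.EqvGen.trans _ _ _ (ih1.2 h1 hb) (ih2.2 hb h2)

end SylvProof

/-- The number of sylvester congruence classes of permutations in `S_n` equals the
Catalan number `c_n = (1/(n+1)) * binomial(2n, n)`. -/
theorem stmt11 (n : ℕ) :
    Nat.card (Quotient
      (⟨fun a b : {l : List ℕ // l.Perm ((List.range n).map (· + 1))} =>
          Relation.EqvGen (fun a b => SylvAdj a.1 b.1) a b,
        Relation.EqvGen.is_equivalence _⟩ : Setoid _))
      = (2 * n).choose n / (n + 1) := by
  classical
  open SylvProof in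
  set L : List ℕ := (List.range n).map (· + 1) with hLdef
  have hLnd : L.Nodup := List.Nodup.map (fun a b h => by omega) List.nodup_range
  have hLlen : L.length = n := by simp [hLdef]
  set sd : Setoid {l : List ℕ // l.Perm L} :=
    (⟨fun a b => Relation.EqvGen (fun a b => SylvAdj a.1 b.1) a b,
      Relation.EqvGen.is_equivalence _⟩) with hsd
  have hnodup : ∀ w : {l : List ℕ // l.Perm L}, w.1.Nodup :=
    fun w => (w.2.nodup_iff).2 hLnd
  have Pcong : ∀ a b : {l : List ℕ // l.Perm L},
      Relation.EqvGen (fun a b => SylvAdj a.1 b.1) a b → P a.1 = P b.1 := by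
    intro a b h
    induction h with
    | rel a b hab => exact P_sylvAdj hab (hnodup a)
    | refl a => rfl
    | symm a b _ ih => exact ih.symm
    | trans a b c _ _ ih1 ih2 => exact ih1.trans ih2
  have hmemf : ∀ w : {l : List ℕ // l.Perm L},
      shape (P w.1) ∈ BinaryTree.treesOfNumNodesEq n := by
    intro w
    rw [BinaryTree.mem_treesOfNumNodesEq, numNodes_shape, numNodes_P, w.2.length_eq, hLlen]
  let f : {l : List ℕ // l.Perm L} → {t : BinaryTree Unit // t ∈ BinaryTree.treesOfNumNodesEq n} :=
    fun w => ⟨shape (P w.1), hmemf w⟩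
  let g : Quotient sd → {t : BinaryTree Unit // t ∈ BinaryTree.treesOfNumNodesEq n} :=
    Quotient.lift f (fun a b h => Subtype.ext (congrArg shape (Pcong a b h)))
  have hinj : Function.Injective g := by
    intro q1 q2
    induction q1 using Quotient.ind with | _ a =>
    induction q2 using Quotient.ind with | _ b =>
    intro hfe
    have hs : shape (P a.1) = shape (P b.1) := congrArg Subtype.val hfe
    have sa : (ino (P a.1)).Pairwise (· < ·) := sorted_ino (isBST_P (hnodup a))
    have sb : (ino (P b.1)).Pairwise (· < ·) := sorted_ino (isBST_P (hnodup b))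
    have hperm : (ino (P a.1)).Perm (ino (P b.1)) :=
      ((perm_ino_P.trans a.2).trans b.2.symm).trans perm_ino_P.symm
    have hino : ino (P a.1) = ino (P b.1) :=
      List.Perm.eq_of_pairwise'
        (sa.imp (fun h => le_of_lt h) : (ino (P a.1)).Pairwise (· ≤ ·))
        (sb.imp (fun h => le_of_lt h) : (ino (P b.1)).Pairwise (· ≤ ·)) hperm
    have hPeq : P a.1 = P b.1 := eq_of_shape_ino hs hino
    have hc1 : SylvCong a.1 (canon (P a.1)) := toCanon a.1.length a.1 le_rfl (hnodup a)
    have hc2 : SylvCong b.1 (canon (P b.1)) := toCanon b.1.length b.1 le_rfl (hnodup b)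
    have hcong : SylvCong a.1 b.1 := by
      rw [hPeq] at hc1
      exact Relation.EqvGen.trans _ _ _ hc1 (Relation.EqvGen.symm _ _ hc2)
    apply Quotient.sound
    have := (transfer L hcong).2 a.2 b.2
    exact this
  have hsurj : Function.Surjective g := by
    rintro ⟨t, ht⟩
    have hn : t.numNodes = n := BinaryTree.mem_treesOfNumNodesEq.1 ht
    have hinoT : ino (lbl t 1) = L := by
      rw [ino_lbl, range'_eq_map, hn, hLdef]
    have hperm : (canon (lbl t 1)).Perm L := hinoT ▸ perm_canon_ino (lbl t 1)
    refine ⟨⟦⟨canon (lbl t 1), hperm⟩⟧, ?_⟩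
    apply Subtype.ext
    show shape (P (canon (lbl t 1))) = t
    rw [P_canon (isBST_lbl t 1), shape_lbl]
  have : Nat.card (Quotient sd) = Nat.card {t : BinaryTree Unit // t ∈ BinaryTree.treesOfNumNodesEq n} :=
    Nat.card_congr (Equiv.ofBijective g ⟨hinj, hsurj⟩)
  rw [this, Nat.card_eq_finsetCard, BinaryTree.treesOfNumNodesEq_card_eq_catalan n,
    catalan_eq_centralBinom_div, Nat.centralBinom]
end
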